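/- Loss of convexity of the stored energy due to the non-Hookean γ-term: let d ≥ 1 and let λ, G, γ be real constants with γ > (√d/2)·λ + G/√d. Then the function W : ℝ^{d×d} → ℝ, W(e) = (λ/2)·(tr e)² + G·‖e‖_F² − γ·(tr e)·‖e‖_F, is not convex; indeed W(t·𝕀) = t²·((λ/2)·d² + G·d − γ·d^{3/2}) for all t ≥ 0, with negative coefficient, so convexity fails along the ray of isotropic dilations. -/
import Mathlib


open Matrix Real

noncomputable section

/-- The Frobenius norm `‖A‖_F = √(tr(Aᵀ·A))`. -/
def normF {d : ℕ} (A : Matrix (Fin d) (Fin d) ℝ) : ℝ :=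
  Real.sqrt (Matrix.trace (Aᵀ * A))

/-- The small-strain mechanical stored energy (2.1) without the Biot term. -/
def Wsmall {d : ℕ} (lam G gam : ℝ) (e : Matrix (Fin d) (Fin d) ℝ) : ℝ :=
  lam / 2 * (Matrix.trace e)^2 + G * Matrix.trace (eᵀ * e)
    - gam * Matrix.trace e * normF e

lemma trace_smul_one (d : ℕ) (t : ℝ) :
    Matrix.trace (t • (1 : Matrix (Fin d) (Fin d) ℝ)) = t * d := by
  simp [Matrix.trace_smul, Matrix.trace_one, mul_comm]

lemma key_eval (d : ℕ) (lam G gam : ℝ) (t : ℝ) (ht : 0 ≤ t) :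
    Wsmall lam G gam (t • (1 : Matrix (Fin d) (Fin d) ℝ))
      = t^2 * (lam / 2 * (d : ℝ)^2 + G * d - gam * (d : ℝ) ^ ((3:ℝ)/2)) := by
  have htr : Matrix.trace ((t • (1 : Matrix (Fin d) (Fin d) ℝ))ᵀ
      * (t • (1 : Matrix (Fin d) (Fin d) ℝ))) = t^2 * d := by
    simp [Matrix.transpose_smul, Matrix.smul_mul, Matrix.mul_smul, smul_smul,
      Matrix.trace_smul, Matrix.trace_one, sq, mul_comm, mul_assoc]
  have hn : normF (t • (1 : Matrix (Fin d) (Fin d) ℝ)) = t * Real.sqrt d := by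
    rw [normF, htr, Real.sqrt_mul (sq_nonneg t), Real.sqrt_sq ht]
  have hrpow : (d : ℝ) ^ ((3:ℝ)/2) = d * Real.sqrt d := by
    rw [show ((3:ℝ)/2) = 1 + 1/2 by norm_num, Real.rpow_add' (by positivity) (by norm_num),
      Real.rpow_one, ← Real.sqrt_eq_rpow]
  rw [Wsmall, htr, trace_smul_one, hn, hrpow]
  ring

/-- Loss of convexity of the stored energy due to the non-Hookean γ-term: if
`γ > (√d/2)·λ + G/√d` then `W` is not convex; indeed
`W(t·𝕀) = t²·((λ/2)·d² + G·d − γ·d^{3/2})` for all `t ≥ 0`, with negative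
coefficient, so convexity fails along the ray of isotropic dilations. -/
theorem stored_energy_not_convex
    (d : ℕ) (hd : 1 ≤ d) (lam G gam : ℝ)
    (hgam : Real.sqrt d / 2 * lam + G / Real.sqrt d < gam) :
    ¬ ConvexOn ℝ Set.univ (Wsmall (d := d) lam G gam)
    ∧ (∀ t : ℝ, 0 ≤ t →
        Wsmall lam G gam (t • (1 : Matrix (Fin d) (Fin d) ℝ))
          = t^2 * (lam / 2 * (d : ℝ)^2 + G * d - gam * (d : ℝ) ^ ((3:ℝ)/2)))
    ∧ lam / 2 * (d : ℝ)^2 + G * d - gam * (d : ℝ) ^ ((3:ℝ)/2) < 0 := by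
  have hd0 : (0:ℝ) < d := by exact_mod_cast hd
  have hs : (0:ℝ) < Real.sqrt d := Real.sqrt_pos.mpr hd0
  have hrpow : (d : ℝ) ^ ((3:ℝ)/2) = d * Real.sqrt d := by
    rw [show ((3:ℝ)/2) = 1 + 1/2 by norm_num, Real.rpow_add' (by positivity) (by norm_num),
      Real.rpow_one, ← Real.sqrt_eq_rpow]
  have hcoef : lam / 2 * (d : ℝ)^2 + G * d - gam * (d : ℝ) ^ ((3:ℝ)/2) < 0 := by
    rw [hrpow]
    have hss : Real.sqrt d * Real.sqrt d = d := Real.mul_self_sqrt hd0.le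
    have hG : G / Real.sqrt d * Real.sqrt d = G := div_mul_cancel₀ G hs.ne'
    have e : Real.sqrt d * (Real.sqrt d/2*lam + G/Real.sqrt d) = (d:ℝ)/2*lam + G := by
      rw [mul_add, mul_comm (Real.sqrt d) (G / Real.sqrt d), hG,
        show Real.sqrt d * (Real.sqrt d/2*lam) = (Real.sqrt d * Real.sqrt d)/2*lam by ring, hss]
    have h1 : (d:ℝ)/2*lam + G < gam * Real.sqrt d := by
      have := mul_lt_mul_of_pos_left hgam hs
      rw [e] at this
      linarith [this, mul_comm gam (Real.sqrt d)]
    nlinarith [mul_lt_mul_of_pos_left h1 hd0]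
  refine ⟨?_, fun t ht => key_eval d lam G gam t ht, hcoef⟩
  intro hC
  have h0 := key_eval d lam G gam 0 le_rfl
  have h1 := key_eval d lam G gam 1 zero_le_one
  have h2 := key_eval d lam G gam 2 (by norm_num)
  have hle := hC.2 (Set.mem_univ (0 : Matrix (Fin d) (Fin d) ℝ))
    (Set.mem_univ ((2:ℝ) • (1 : Matrix (Fin d) (Fin d) ℝ)))
    (by norm_num : (0:ℝ) ≤ (1/2:ℝ)) (by norm_num : (0:ℝ) ≤ (1/2:ℝ)) (by norm_num)
  have heq : (1/2 : ℝ) • (0 : Matrix (Fin d) (Fin d) ℝ)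
      + (1/2 : ℝ) • ((2:ℝ) • (1 : Matrix (Fin d) (Fin d) ℝ))
      = (1:ℝ) • (1 : Matrix (Fin d) (Fin d) ℝ) := by
    rw [smul_zero, zero_add, smul_smul]; norm_num
  rw [zero_smul] at h0
  rw [heq, h0, h1, h2] at hle
  simp only [smul_eq_mul] at hle
  norm_num at hle
  linarith
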